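/- Let (u_1,…,u_i) be a reverse path with i ≥ 2 and consider the randomized PROBE process for (u_1,…,u_i). Then for every node v ∈ V, Pr[v ∈ S_{i−1}] = Score(v, i−1), the deterministic PROBE score of v for the reverse path (u_1,…,u_i) (equivalently, the first-meeting probability of v with respect to (u_1,…,u_i)). -/

import Mathlib

open scoped BigOperators Classical

variable {V : Type*}

/-- Deterministic PROBE scores of a reverse path, where `q` is the *reversed*
reverse path, i.e. `q = (u_i, u_{i-1}, …, u_1)` for the reverse path
`(u_1,…,u_i)`: `Score(v,0) = 1` iff `v = u_i`, and `Score(v,j+1) = 0` if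
`v = u_{i-j-1}` (which is `q[j+1]`), else `∑_{x∈I(v)} (√c/|I(v)|)·Score(x,j)`. -/
noncomputable def Score (I : V → Finset V) (c : ℝ) (q : List V) : ℕ → V → ℝ
  | 0, v => if q.head? = some v then 1 else 0
  | j + 1, v =>
      if q[j + 1]? = some v then 0
      else ∑ x ∈ I v, Real.sqrt c / ((I v).card : ℝ) * Score I c q j x

/-- Weight of an outcome of the randomized PROBE process with `m` iterations:
for each iteration `j` and node `v`, the outcome records the uniformly sampled
in-neighbor `X_{j,v}` of `v` and the Bernoulli(`√c`) coin `B_{j,v}`, with all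
these random variables mutually independent. -/
noncomputable def probeWeight [Fintype V] (I : V → Finset V) (c : ℝ) {m : ℕ}
    (ω : Fin m × V → V × Bool) : ℝ :=
  ∏ jv : Fin m × V,
    (if (ω jv).1 ∈ I jv.2 then 1 / ((I jv.2).card : ℝ) else 0) *
      (if (ω jv).2 then Real.sqrt c else 1 - Real.sqrt c)

/-- The random sets of the randomized PROBE process for the reverse path
`(u_1,…,u_i)`, where `q` is the reversed reverse path: `S_0 = {u_i}` and, for
`0 ≤ j ≤ i−2`, `S_{j+1} = {v : v ≠ u_{i−j−1}, X_{j,v} ∈ S_j, B_{j,v} = true}`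
(note `u_{i−j−1} = q[j+1]`). -/
def randSet (I : V → Finset V) (q : List V) {m : ℕ}
    (ω : Fin m × V → V × Bool) : ℕ → Set V
  | 0 => {v | q.head? = some v}
  | j + 1 =>
      {v | q[j + 1]? ≠ some v ∧
        ∃ h : j < m, (ω (⟨j, h⟩, v)).1 ∈ randSet I q ω j ∧ (ω (⟨j, h⟩, v)).2 = true}

noncomputable def fac (I : V → Finset V) (c : ℝ) (w : V) (b : V × Bool) : ℝ :=
  (if b.1 ∈ I w then 1 / ((I w).card : ℝ) else 0) *
    (if b.2 then Real.sqrt c else 1 - Real.sqrt c)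


lemma probeWeight_eq [Fintype V] (I : V → Finset V) (c : ℝ) {m : ℕ}
    (ω : Fin m × V → V × Bool) :
    probeWeight I c ω = ∏ jv : Fin m × V, fac I c jv.2 (ω jv) := rfl


lemma fac_sum [Fintype V] (I : V → Finset V) (hI : ∀ v, (I v).Nonempty) (c : ℝ) (w : V) :
    ∑ b : V × Bool, fac I c w b = 1 := by
  have hcard : ((I w).card : ℝ) ≠ 0 := by
    exact_mod_cast Finset.card_ne_zero.2 (hI w)
  rw [show (1 : ℝ) = (∑ x : V, if x ∈ I w then 1 / ((I w).card : ℝ) else 0) *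
      (∑ t : Bool, if t then Real.sqrt c else 1 - Real.sqrt c) by
    simp [Finset.sum_ite_mem, Finset.sum_const, nsmul_eq_mul]
    field_simp]
  rw [Finset.sum_mul_sum, Fintype.sum_prod_type]
  rfl


lemma probeWeight_total [Fintype V] (I : V → Finset V) (hI : ∀ v, (I v).Nonempty)
    (c : ℝ) (m : ℕ) : ∑ ω : Fin m × V → V × Bool, probeWeight I c ω = 1 := by
  simp_rw [probeWeight_eq]
  rw [← Fintype.prod_sum (fun (jv : Fin m × V) (b : V × Bool) => fac I c jv.2 b)]
  exact Finset.prod_eq_one fun jv _ => fac_sum I hI c jv.2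

lemma randSet_congr (I : V → Finset V) (q : List V) {m : ℕ}
    (ω ω' : Fin m × V → V × Bool) :
    ∀ k : ℕ, (∀ (j : Fin m) (w : V), (j : ℕ) < k → ω (j, w) = ω' (j, w)) →
      randSet I q ω k = randSet I q ω' k
  | 0, _ => rfl
  | k + 1, h => by
    have ih := randSet_congr I q ω ω' k fun j w hj => h j w (hj.trans (Nat.lt_succ_self k))
    ext x
    simp only [randSet, Set.mem_setOf_eq, ih]
    constructor <;> rintro ⟨h1, hm, h2, h3⟩
    · rw [h ⟨k, hm⟩ x (Nat.lt_succ_self k)] at h2 h3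
      exact ⟨h1, hm, h2, h3⟩
    · rw [← h ⟨k, hm⟩ x (Nat.lt_succ_self k)] at h2 h3
      exact ⟨h1, hm, h2, h3⟩

lemma sum_split [Fintype V] (I : V → Finset V) (hI : ∀ v, (I v).Nonempty) (c : ℝ)
    {m : ℕ} (a : Fin m × V) (g : V × Bool → ℝ) (F : (Fin m × V → V × Bool) → ℝ)
    (hF : ∀ ω ω' : Fin m × V → V × Bool, (∀ i, i ≠ a → ω i = ω' i) → F ω = F ω') :
    ∑ ω : Fin m × V → V × Bool, probeWeight I c ω * (g (ω a) * F ω)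
      = (∑ b : V × Bool, fac I c a.2 b * g b) *
          ∑ ω : Fin m × V → V × Bool, probeWeight I c ω * F ω := by
  classical
  set e := Equiv.funSplitAt a (V × Bool) with he
  have hsymm : ∀ (p : (V × Bool) × ({ j // j ≠ a } → V × Bool)) (i : Fin m × V) (hi : i ≠ a),
      e.symm p i = p.2 ⟨i, hi⟩ := by
    intro p i hi
    simp [he, Equiv.funSplitAt, Equiv.piSplitAt, hi]
  have hsymma : ∀ p : (V × Bool) × ({ j // j ≠ a } → V × Bool), e.symm p a = p.1 := by
    intro p; simp [he, Equiv.funSplitAt, Equiv.piSplitAt]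
  have hW : ∀ p : (V × Bool) × ({ j // j ≠ a } → V × Bool),
      probeWeight I c (e.symm p)
        = fac I c a.2 p.1 * ∏ i : { j // j ≠ a }, fac I c (i : Fin m × V).2 (p.2 i) := by
    intro p
    rw [probeWeight_eq, ← Finset.mul_prod_erase Finset.univ _ (Finset.mem_univ a), hsymma]
    congr 1
    rw [Finset.prod_subtype (p := fun x => x ≠ a) (Finset.univ.erase a)
        (fun x => by simp [Finset.mem_erase]) (fun i => fac I c i.2 (e.symm p i))]
    exact Finset.prod_congr rfl fun i _ => by rw [hsymm p i i.2]
  have hFe : ∀ (b b' : V × Bool) (ρ : { j // j ≠ a } → V × Bool),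
      F (e.symm (b, ρ)) = F (e.symm (b', ρ)) := by
    intro b b' ρ
    exact hF _ _ fun i hi => by rw [hsymm _ i hi, hsymm _ i hi]
  have key : ∀ H : (Fin m × V → V × Bool) → ℝ,
      ∑ ω : Fin m × V → V × Bool, probeWeight I c ω * H ω
        = ∑ b : V × Bool, ∑ ρ : { j // j ≠ a } → V × Bool,
            (fac I c a.2 b * ∏ i : { j // j ≠ a }, fac I c (i : Fin m × V).2 (ρ i))
              * H (e.symm (b, ρ)) := by
    intro H
    rw [← Equiv.sum_comp e.symm (fun ω => probeWeight I c ω * H ω), Fintype.sum_prod_type]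
    exact Finset.sum_congr rfl fun b _ => Finset.sum_congr rfl fun ρ _ => by rw [hW]
  rw [key (fun ω => g (ω a) * F ω), key F]
  set W' : ({ j // j ≠ a } → V × Bool) → ℝ :=
    fun ρ => ∏ i : { j // j ≠ a }, fac I c (i : Fin m × V).2 (ρ i) with hW'
  set F' : ({ j // j ≠ a } → V × Bool) → ℝ := fun ρ => F (e.symm ((a.2, true), ρ)) with hF'
  have lhs_eq : ∀ b : V × Bool, ∀ ρ,
      (fac I c a.2 b * W' ρ) * (g (e.symm (b, ρ) a) * F (e.symm (b, ρ)))
        = (fac I c a.2 b * g b) * (W' ρ * F' ρ) := by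
    intro b ρ
    rw [hsymma, hF', hFe b (a.2, true) ρ]
    ring
  calc ∑ b : V × Bool, ∑ ρ : { j // j ≠ a } → V × Bool,
        (fac I c a.2 b * W' ρ) * ((fun ω => g (ω a) * F ω) (e.symm (b, ρ)))
      = ∑ b : V × Bool, (fac I c a.2 b * g b) * ∑ ρ, W' ρ * F' ρ := by
        refine Finset.sum_congr rfl fun b _ => ?_
        rw [Finset.mul_sum]
        exact Finset.sum_congr rfl fun ρ _ => lhs_eq b ρ
    _ = (∑ b : V × Bool, fac I c a.2 b * g b) * ∑ ρ, W' ρ * F' ρ := by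
        rw [Finset.sum_mul]
    _ = (∑ b : V × Bool, fac I c a.2 b * g b) *
          ∑ b : V × Bool, ∑ ρ : { j // j ≠ a } → V × Bool,
            (fac I c a.2 b * W' ρ) * F (e.symm (b, ρ)) := by
        congr 1
        have : ∀ b : V × Bool, ∑ ρ : { j // j ≠ a } → V × Bool,
            (fac I c a.2 b * W' ρ) * F (e.symm (b, ρ))
              = fac I c a.2 b * ∑ ρ, W' ρ * F' ρ := by
          intro b
          rw [Finset.mul_sum]
          refine Finset.sum_congr rfl fun ρ _ => ?_
          rw [hF', hFe b (a.2, true) ρ]; ring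
        rw [Finset.sum_congr rfl fun b _ => this b, ← Finset.sum_mul,
          fac_sum I hI c a.2, one_mul]

lemma main_aux [Fintype V] (I : V → Finset V) (hI : ∀ v, (I v).Nonempty) (c : ℝ)
    (q : List V) {m : ℕ} (k : ℕ) (hk : k ≤ m) (x : V) :
    ∑ ω : Fin m × V → V × Bool,
        probeWeight I c ω * (if x ∈ randSet I q ω k then 1 else 0)
      = Score I c q k x := by
  induction k generalizing x with
  | zero =>
    have : ∀ ω : Fin m × V → V × Bool,
        (if x ∈ randSet I q ω 0 then (1:ℝ) else 0)
          = (if q.head? = some x then (1:ℝ) else 0) := by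
      intro ω; exact if_congr Iff.rfl rfl rfl
    simp_rw [this]
    rw [← Finset.sum_mul, probeWeight_total I hI c m, one_mul]
    simp [Score]
  | succ k ih =>
    have hk' : k < m := Nat.lt_of_succ_le hk
    have ih' := ih (Nat.le_of_lt hk')
    set a : Fin m × V := (⟨k, hk'⟩, x) with ha
    by_cases hq : q[k + 1]? = some x
    · have : ∀ ω : Fin m × V → V × Bool,
          (if x ∈ randSet I q ω (k + 1) then (1:ℝ) else 0) = 0 := by
        intro ω
        rw [if_neg]
        intro hmem
        exact hmem.1 hq
      simp_rw [this, mul_zero, Finset.sum_const_zero]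
      simp [Score, hq]
    · have hiff : ∀ ω : Fin m × V → V × Bool,
          x ∈ randSet I q ω (k + 1) ↔
            ((ω a).1 ∈ randSet I q ω k ∧ (ω a).2 = true) := by
        intro ω
        simp only [randSet, Set.mem_setOf_eq]
        constructor
        · rintro ⟨-, hm, h2, h3⟩; exact ⟨h2, h3⟩
        · rintro ⟨h2, h3⟩; exact ⟨hq, hk', h2, h3⟩
      have hind : ∀ ω : Fin m × V → V × Bool,
          (if x ∈ randSet I q ω (k + 1) then (1:ℝ) else 0)
            = ∑ b : V × Bool, (if ω a = b then (1:ℝ) else 0) *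
                (if b.1 ∈ randSet I q ω k ∧ b.2 = true then (1:ℝ) else 0) := by
        intro ω
        rw [Finset.sum_eq_single (ω a)]
        · rw [if_pos rfl, one_mul]
          exact if_congr (hiff ω) rfl rfl
        · intro b _ hb
          rw [if_neg (fun h => hb h.symm), zero_mul]
        · intro h; exact absurd (Finset.mem_univ _) h
      simp_rw [hind, Finset.mul_sum]
      rw [Finset.sum_comm]
      have hinner : ∀ b : V × Bool,
          ∑ ω : Fin m × V → V × Bool,
              probeWeight I c ω * ((if ω a = b then (1:ℝ) else 0) *
                (if b.1 ∈ randSet I q ω k ∧ b.2 = true then (1:ℝ) else 0))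
            = fac I c x b * (if b.2 = true then Score I c q k b.1 else 0) := by
        intro b
        have hF : ∀ ω ω' : Fin m × V → V × Bool, (∀ i, i ≠ a → ω i = ω' i) →
            (if b.1 ∈ randSet I q ω k ∧ b.2 = true then (1:ℝ) else 0)
              = (if b.1 ∈ randSet I q ω' k ∧ b.2 = true then (1:ℝ) else 0) := by
          intro ω ω' hωω'
          have : randSet I q ω k = randSet I q ω' k := by
            refine randSet_congr I q ω ω' k fun j w hj => hωω' (j, w) ?_
            intro hcontra
            rw [ha] at hcontra
            have : (j : ℕ) = k := congrArg (fun p => (p.1 : ℕ)) hcontra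
            omega
          rw [this]
        rw [sum_split I hI c a (fun y => if y = b then (1:ℝ) else 0) _ hF]
        have h1 : (∑ b' : V × Bool, fac I c a.2 b' * (if b' = b then (1:ℝ) else 0))
            = fac I c x b := by
          rw [Finset.sum_eq_single b]
          · rw [if_pos rfl, mul_one]
          · intro b' _ hb'; rw [if_neg hb', mul_zero]
          · intro h; exact absurd (Finset.mem_univ _) h
        rw [h1]
        congr 1
        by_cases hb2 : b.2 = true
        · simp only [hb2, and_true, if_true]
          exact ih' b.1
        · simp only [hb2, and_false, if_false]
          simp
      simp_rw [hinner]
      rw [Fintype.sum_prod_type]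
      have hterm : ∀ y : V,
          (∑ t : Bool, fac I c x (y, t) *
              (if (y, t).2 = true then Score I c q k y else 0))
            = (if y ∈ I x then Real.sqrt c / ((I x).card : ℝ) * Score I c q k y else 0) := by
        intro y
        rw [Fintype.sum_bool]
        by_cases hy : y ∈ I x
        · simp only [fac, hy, if_pos, if_true, Bool.false_eq_true, if_false, mul_zero, add_zero]
          ring
        · simp [fac, hy]
      simp_rw [hterm]
      rw [Finset.sum_ite_mem, Finset.univ_inter]
      simp [Score, hq]

/-- Lemma B.2 (correctness of the randomized PROBE algorithm): for a reverse
path `p = (u_1,…,u_i)` with `i ≥ 2` and every node `v`, the probability that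
`v` is selected into `S_{i−1}` by the randomized PROBE process equals the
deterministic PROBE score `Score(v,i−1)` (the first-meeting probability of `v`
with respect to `(u_1,…,u_i)`). -/
theorem randomized_probe_correct [Fintype V]
    (I : V → Finset V) (hI : ∀ v, (I v).Nonempty)
    (c : ℝ) (hc0 : 0 < c) (hc1 : c < 1)
    (p : List V) (hchain : List.Chain' (fun a b => b ∈ I a) p) (hlen : 2 ≤ p.length)
    (v : V) :
    ∑ ω : Fin (p.length - 1) × V → V × Bool,
        probeWeight I c ω *
          (if v ∈ randSet I p.reverse ω (p.length - 1) then 1 else 0)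
      = Score I c p.reverse (p.length - 1) v :=
  main_aux I hI c p.reverse (p.length - 1) le_rfl v
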